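/- Let U be a finite submodular universe of separations and 𝒫 a robust set of profiles in U. For each pair P, P' of distinguishable profiles in 𝒫 let A_{P,P'} = {a ∈ U : a distinguishes P and P' efficiently}. Then the family of these sets A_{P,P'} splinters. -/
import Mathlib


/-!
For a robust set of profiles in a finite submodular universe of separations,
the family of the sets of efficient distinguishers of pairs of distinguishable
profiles splinters.
-/

variable {U : Type*}

/-- `star` is an order-reversing involution: `s** = s` and `r ≤ s ↔ s* ≤ r*`. -/
def OrderReversingInvolution [Lattice U] (star : U → U) : Prop :=
  (∀ s : U, star (star s) = s) ∧ ∀ r s : U, r ≤ s ↔ star s ≤ star r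

/-- Two separations are nested if they have comparable orientations. -/
def Nested [Lattice U] (star : U → U) (r s : U) : Prop :=
  r ≤ s ∨ r ≤ star s ∨ star r ≤ s ∨ star r ≤ star s

/-- `O` is an orientation of `S`: it contains, for each `s ∈ S`, exactly one
of `s` and `star s`. -/
def Orients [Lattice U] (star : U → U) (S O : Set U) : Prop :=
  O ⊆ S ∧ ∀ s ∈ S, (s ∈ O ∨ star s ∈ O) ∧ (s ∈ O → star s ∈ O → s = star s)

/-- `O` is consistent: there are no `r, s ∈ O` with `star r < s`. -/
def Consistent [Lattice U] (star : U → U) (O : Set U) : Prop :=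
  ∀ r ∈ O, ∀ s ∈ O, ¬ star r < s

/-- A profile of `S` is a consistent orientation `P` of `S` such that for all
`r, s ∈ P` we have `star r ⊓ star s ∉ P`. -/
def IsProfile [Lattice U] (star : U → U) (S P : Set U) : Prop :=
  Orients star S P ∧ Consistent star P ∧
    ∀ r ∈ P, ∀ s ∈ P, star r ⊓ star s ∉ P

/-- A profile in `U` (with order function `f`) is a `k`-profile for some
integer `k`, i.e. a profile of `S_k = {s | f s < k}`. -/
def IsProfileIn [Lattice U] (star : U → U) (f : U → ℝ) (P : Set U) : Prop :=
  ∃ k : ℤ, IsProfile star {s : U | f s < (k : ℝ)} P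

/-- `s` distinguishes `P` and `P'`: one orientation of `s` lies in `P` and the
other in `P'`. -/
def Distinguishes [Lattice U] (star : U → U) (s : U) (P P' : Set U) : Prop :=
  (s ∈ P ∧ star s ∈ P') ∨ (star s ∈ P ∧ s ∈ P')

/-- `s` distinguishes `P` and `P'` efficiently: it does so and has minimum
order among all separations distinguishing `P` and `P'`. -/
def EffDist [Lattice U] (star : U → U) (f : U → ℝ) (s : U) (P P' : Set U) : Prop :=
  Distinguishes star s P P' ∧ ∀ t : U, Distinguishes star t P P' → f s ≤ f t

/-- A profile `P` is robust if there are no `r, s` with `star r ∈ P`,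
`r ⊓ s ∈ P`, `r ⊓ star s ∈ P`, `f (r ⊓ s) < f r` and `f (r ⊓ star s) < f r`. -/
def RobustProfile [Lattice U] (star : U → U) (f : U → ℝ) (P : Set U) : Prop :=
  ¬ ∃ r s : U, star r ∈ P ∧ r ⊓ s ∈ P ∧ r ⊓ star s ∈ P ∧
      f (r ⊓ s) < f r ∧ f (r ⊓ star s) < f r


/-- Two separations cross if they are not nested. -/
def Crosses [Lattice U] (star : U → U) (r s : U) : Prop := ¬ Nested star r s

/-- `c` is a corner separation of `r` and `s`: a join of orientations of `r`
and `s`, or the involution of such a join. -/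
def IsCornerSep [Lattice U] (star : U → U) (c r s : U) : Prop :=
  ∃ r' s', (r' = r ∨ r' = star r) ∧ (s' = s ∨ s' = star s) ∧
    (c = r' ⊔ s' ∨ c = star (r' ⊔ s'))

/-- A family `A` of subsets of `U` splinters if for all `i`, `j` and every
crossing pair `a ∈ A i \ A j`, `b ∈ A j \ A i`, at least one corner separation
of `a` and `b` lies in `A i ∪ A j`. -/
def Splinters [Lattice U] (star : U → U) {I : Type*} (A : I → Set U) : Prop :=
  ∀ i j : I, ∀ a ∈ A i, a ∉ A j → ∀ b ∈ A j, b ∉ A i → Crosses star a b →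
    ∃ c, IsCornerSep star c a b ∧ c ∈ A i ∪ A j

section Lemmas

variable [Lattice U] {star : U → U} {f : U → ℝ}

theorem star_sup (hstar : OrderReversingInvolution star) (r s : U) :
    star (r ⊔ s) = star r ⊓ star s := by
  obtain ⟨hinv, hrev⟩ := hstar
  apply le_antisymm
  · exact le_inf ((hrev r _).mp le_sup_left) ((hrev s _).mp le_sup_right)
  · have h : r ⊔ s ≤ star (star r ⊓ star s) := by
      refine sup_le ?_ ?_
      · rw [hrev, hinv]; exact inf_le_left
      · rw [hrev, hinv]; exact inf_le_right
    have h2 := (hrev _ _).mp h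
    rwa [hinv] at h2

theorem dist_symm {s : U} {P P' : Set U} (h : Distinguishes star s P P') :
    Distinguishes star s P' P := by
  rcases h with ⟨h1, h2⟩ | ⟨h1, h2⟩
  · exact Or.inr ⟨h2, h1⟩
  · exact Or.inl ⟨h2, h1⟩

theorem effdist_symm {s : U} {P P' : Set U} (h : EffDist star f s P P') :
    EffDist star f s P' P :=
  ⟨dist_symm h.1, fun t ht => h.2 t (dist_symm ht)⟩

theorem effdist_star (hinv : ∀ s : U, star (star s) = s)
    (hfstar : ∀ s : U, f (star s) = f s) {s : U} {P P' : Set U} :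
    EffDist star f (star s) P P' ↔ EffDist star f s P P' := by
  unfold EffDist Distinguishes
  rw [hinv, hfstar]
  tauto

theorem nested_symm (hstar : OrderReversingInvolution star) {r s : U}
    (h : Nested star r s) : Nested star s r := by
  obtain ⟨hinv, hrev⟩ := hstar
  rcases h with h | h | h | h
  · exact Or.inr (Or.inr (Or.inr ((hrev _ _).mp h)))
  · have h2 := (hrev _ _).mp h; rw [hinv] at h2; exact Or.inr (Or.inl h2)
  · have h2 := (hrev _ _).mp h; rw [hinv] at h2; exact Or.inr (Or.inr (Or.inl h2))
  · have h2 := (hrev _ _).mp h; rw [hinv, hinv] at h2; exact Or.inl h2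

theorem nested_star_left (hinv : ∀ s : U, star (star s) = s) {r s : U}
    (h : Nested star (star r) s) : Nested star r s := by
  unfold Nested at h ⊢
  rw [hinv] at h
  tauto

theorem corner_symm {c a b : U} (h : IsCornerSep star c a b) :
    IsCornerSep star c b a := by
  obtain ⟨r', s', h1, h2, h3⟩ := h
  exact ⟨s', r', h2, h1, by rw [sup_comm s' r']; exact h3⟩

theorem corner_star_left (hinv : ∀ s : U, star (star s) = s) {c a b : U}
    (h : IsCornerSep star c (star a) b) : IsCornerSep star c a b := by
  obtain ⟨r', s', h1, h2, h3⟩ := h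
  refine ⟨r', s', ?_, h2, h3⟩
  rcases h1 with h | h
  · exact Or.inr h
  · rw [hinv] at h; exact Or.inl h

theorem robust_contra (hstar : OrderReversingInvolution star)
    (hfstar : ∀ s : U, f (star s) = f s) {R R' : Set U}
    (hR : IsProfileIn star f R) (hR' : IsProfileIn star f R')
    (hRrob : RobustProfile star f R)
    {a b : U} (haR : star a ∈ R) (haR' : a ∈ R')
    (hnd1 : ¬ Distinguishes star (a ⊓ b) R R')
    (hnd2 : ¬ Distinguishes star (a ⊓ star b) R R')
    (ho1 : f (a ⊓ b) < f a) (ho2 : f (a ⊓ star b) < f a)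
    (hlt1 : a ⊓ b < a) (hlt2 : a ⊓ star b < a) : False := by
  have hinv := hstar.1
  obtain ⟨k, ⟨hsub, hor⟩, hcons, -⟩ := hR
  obtain ⟨k', ⟨hsub', hor'⟩, hcons', -⟩ := hR'
  have hfa' : f a < (k' : ℝ) := hsub' haR'
  have hfa : f a < (k : ℝ) := by
    have h := hsub haR
    simp only [Set.mem_setOf_eq, hfstar] at h
    exact h
  have memR' : ∀ c : U, c < a → f c < (k' : ℝ) → c ∈ R' := by
    intro c hc hfc
    rcases (hor' c hfc).1 with h | h
    · exact h
    · exact absurd (show star (star c) < a by rw [hinv]; exact hc) (hcons' _ h _ haR')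
  have memR : ∀ c : U, c ∈ R' → ¬ Distinguishes star c R R' → f c < (k : ℝ) → c ∈ R := by
    intro c hcR' hnd hfc
    rcases (hor c hfc).1 with h | h
    · exact h
    · exact absurd (Or.inr ⟨h, hcR'⟩) hnd
  have h1R' := memR' _ hlt1 (lt_trans ho1 hfa')
  have h2R' := memR' _ hlt2 (lt_trans ho2 hfa')
  have h1R := memR _ h1R' hnd1 (lt_trans ho1 hfa)
  have h2R := memR _ h2R' hnd2 (lt_trans ho2 hfa)
  exact hRrob ⟨a, b, haR, h1R, h2R, ho1, ho2⟩

theorem key3 (hstar : OrderReversingInvolution star)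
    (hfstar : ∀ s : U, f (star s) = f s)
    (hfsub : ∀ r s : U, f (r ⊔ s) + f (r ⊓ s) ≤ f r + f s)
    {P P' Q Q' : Set U}
    (hP : IsProfileIn star f P) (hP' : IsProfileIn star f P')
    (hQ : IsProfileIn star f Q) (hQ' : IsProfileIn star f Q')
    (hPrb : RobustProfile star f P) (hP'rb : RobustProfile star f P')
    {a b : U} (ha : EffDist star f a P P') (hb : EffDist star f b Q Q')
    (haQ : a ∈ Q) (haQ' : a ∈ Q') (hbQ : b ∈ Q) (hbQ' : star b ∈ Q')
    (hcross : Crosses star a b) (hle : f a ≤ f b) :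
    ∃ c, IsCornerSep star c a b ∧
      (EffDist star f c P P' ∨ EffDist star f c Q Q') := by
  have hinv := hstar.1
  have hrev := hstar.2
  obtain ⟨k1, ⟨hsubQ, horQ⟩, hconsQ, hpropQ⟩ := hQ
  obtain ⟨k2, ⟨hsubQ', horQ'⟩, hconsQ', hpropQ'⟩ := hQ'
  have hfbQ : f b < (k1 : ℝ) := hsubQ hbQ
  have hfbQ' : f b < (k2 : ℝ) := by
    have h := hsubQ' hbQ'
    simp only [Set.mem_setOf_eq, hfstar] at h
    exact h
  by_cases h1 : f (a ⊔ b) ≤ f b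
  · refine ⟨a ⊔ b, ⟨a, b, Or.inl rfl, Or.inl rfl, Or.inl rfl⟩, Or.inr ?_⟩
    have hdist : Distinguishes star (a ⊔ b) Q Q' := by
      refine Or.inl ⟨?_, ?_⟩
      · rcases (horQ (a ⊔ b) (lt_of_le_of_lt h1 hfbQ)).1 with h | h
        · exact h
        · rw [star_sup hstar] at h
          exact absurd h (hpropQ a haQ b hbQ)
      · rcases (horQ' (a ⊔ b) (lt_of_le_of_lt h1 hfbQ')).1 with h | h
        · exfalso
          apply hconsQ' _ h _ hbQ'
          rw [star_sup hstar]
          refine lt_of_le_of_ne inf_le_right ?_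
          intro he
          apply hcross
          have hba : star b ≤ star a := by rw [← he]; exact inf_le_left
          exact Or.inl ((hrev a b).mpr hba)
        · exact h
    exact ⟨hdist, fun t ht => le_trans h1 (hb.2 t ht)⟩
  by_cases h2 : f (a ⊔ star b) ≤ f b
  · refine ⟨a ⊔ star b, ⟨a, star b, Or.inl rfl, Or.inr rfl, Or.inl rfl⟩, Or.inr ?_⟩
    have hdist : Distinguishes star (a ⊔ star b) Q Q' := by
      refine Or.inr ⟨?_, ?_⟩
      · rcases (horQ (a ⊔ star b) (lt_of_le_of_lt h2 hfbQ)).1 with h | h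
        · exfalso
          apply hconsQ _ h _ hbQ
          rw [star_sup hstar, hinv]
          refine lt_of_le_of_ne inf_le_right ?_
          intro he
          apply hcross
          have hba : b ≤ star a := by rw [← he]; exact inf_le_left
          have h3 : a ≤ star b := by
            rw [hrev a (star b), hinv]; exact hba
          exact Or.inr (Or.inl h3)
        · exact h
      · rcases (horQ' (a ⊔ star b) (lt_of_le_of_lt h2 hfbQ')).1 with h | h
        · exact h
        · rw [star_sup hstar] at h
          exact absurd h (hpropQ' a haQ' (star b) hbQ')
    exact ⟨hdist, fun t ht => le_trans h2 (hb.2 t ht)⟩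
  · exfalso
    push_neg at h1 h2
    have ho1 : f (a ⊓ b) < f a := by have := hfsub a b; linarith
    have ho2 : f (a ⊓ star b) < f a := by
      have := hfsub a (star b); rw [hfstar] at this; linarith
    have hlt1 : a ⊓ b < a :=
      lt_of_le_of_ne inf_le_left (fun he => hcross (Or.inl (inf_eq_left.mp he)))
    have hlt2 : a ⊓ star b < a :=
      lt_of_le_of_ne inf_le_left
        (fun he => hcross (Or.inr (Or.inl (inf_eq_left.mp he))))
    have hnd1 : ¬ Distinguishes star (a ⊓ b) P P' :=
      fun hd => absurd (ha.2 _ hd) (not_le.mpr ho1)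
    have hnd2 : ¬ Distinguishes star (a ⊓ star b) P P' :=
      fun hd => absurd (ha.2 _ hd) (not_le.mpr ho2)
    rcases ha.1 with ⟨haP, haP'⟩ | ⟨haP, haP'⟩
    · exact robust_contra hstar hfstar hP' hP hP'rb haP' haP
        (fun hd => hnd1 (dist_symm hd)) (fun hd => hnd2 (dist_symm hd))
        ho1 ho2 hlt1 hlt2
    · exact robust_contra hstar hfstar hP hP' hPrb haP haP'
        hnd1 hnd2 ho1 ho2 hlt1 hlt2

theorem key2 (hstar : OrderReversingInvolution star)
    (hfstar : ∀ s : U, f (star s) = f s)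
    (hfsub : ∀ r s : U, f (r ⊔ s) + f (r ⊓ s) ≤ f r + f s)
    {P P' Q Q' : Set U}
    (hP : IsProfileIn star f P) (hP' : IsProfileIn star f P')
    (hQ : IsProfileIn star f Q) (hQ' : IsProfileIn star f Q')
    (hPrb : RobustProfile star f P) (hP'rb : RobustProfile star f P')
    {a b : U} (ha : EffDist star f a P P') (hb : EffDist star f b Q Q')
    (haQ : a ∈ Q) (haQ' : a ∈ Q')
    (hcross : Crosses star a b) (hle : f a ≤ f b) :
    ∃ c, IsCornerSep star c a b ∧
      (EffDist star f c P P' ∨ EffDist star f c Q Q') := by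
  rcases hb.1 with ⟨hbQ, hbQ'⟩ | ⟨hbQ, hbQ'⟩
  · exact key3 hstar hfstar hfsub hP hP' hQ hQ' hPrb hP'rb ha hb
      haQ haQ' hbQ hbQ' hcross hle
  · obtain ⟨c, hc, hcm⟩ := key3 hstar hfstar hfsub hP hP' hQ' hQ hPrb hP'rb
      ha (effdist_symm hb) haQ' haQ hbQ' hbQ hcross hle
    exact ⟨c, hc, hcm.imp id effdist_symm⟩

theorem key (hstar : OrderReversingInvolution star)
    (hfstar : ∀ s : U, f (star s) = f s)
    (hfsub : ∀ r s : U, f (r ⊔ s) + f (r ⊓ s) ≤ f r + f s)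
    {P P' Q Q' : Set U}
    (hP : IsProfileIn star f P) (hP' : IsProfileIn star f P')
    (hQ : IsProfileIn star f Q) (hQ' : IsProfileIn star f Q')
    (hPrb : RobustProfile star f P) (hP'rb : RobustProfile star f P')
    {a b : U} (ha : EffDist star f a P P') (hb : EffDist star f b Q Q')
    (hanj : ¬ EffDist star f a Q Q')
    (hcross : Crosses star a b) (hle : f a ≤ f b) :
    ∃ c, IsCornerSep star c a b ∧
      (EffDist star f c P P' ∨ EffDist star f c Q Q') := by
  have hinv := hstar.1
  have hnd : ¬ Distinguishes star a Q Q' :=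
    fun hd => hanj ⟨hd, fun t ht => le_trans hle (hb.2 t ht)⟩
  obtain ⟨k1, ⟨hsubQ, horQ⟩, -, -⟩ := id hQ
  obtain ⟨k2, ⟨hsubQ', horQ'⟩, -, -⟩ := id hQ'
  have hfb1 : f b < (k1 : ℝ) := by
    rcases hb.1 with ⟨h, -⟩ | ⟨h, -⟩
    · exact hsubQ h
    · have h2 := hsubQ h; simp only [Set.mem_setOf_eq, hfstar] at h2; exact h2
  have hfb2 : f b < (k2 : ℝ) := by
    rcases hb.1 with ⟨-, h⟩ | ⟨-, h⟩
    · have h2 := hsubQ' h; simp only [Set.mem_setOf_eq, hfstar] at h2; exact h2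
    · exact hsubQ' h
  rcases (horQ a (lt_of_le_of_lt hle hfb1)).1 with h | h <;>
    rcases (horQ' a (lt_of_le_of_lt hle hfb2)).1 with h' | h'
  · exact key2 hstar hfstar hfsub hP hP' hQ hQ' hPrb hP'rb ha hb h h' hcross hle
  · exact absurd (Or.inl ⟨h, h'⟩) hnd
  · exact absurd (Or.inr ⟨h, h'⟩) hnd
  · obtain ⟨c, hc, hcm⟩ := key2 hstar hfstar hfsub hP hP' hQ hQ' hPrb hP'rb
      ((effdist_star hinv hfstar).mpr ha) hb h h'
      (fun hn => hcross (nested_star_left hinv hn))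
      (by rw [hfstar]; exact hle)
    exact ⟨c, corner_star_left hinv hc, hcm⟩

end Lemmas


/-- For a robust set `Ps` of profiles in a submodular universe, the family of
the sets `A_{P,P'}` of efficient distinguishers of pairs of distinguishable
profiles in `Ps` splinters. -/
theorem efficient_distinguishers_splinter [Lattice U] [Fintype U]
    (star : U → U) (hstar : OrderReversingInvolution star)
    (f : U → ℝ) (hf0 : ∀ s : U, 0 ≤ f s) (hfstar : ∀ s : U, f (star s) = f s)
    (hfsub : ∀ r s : U, f (r ⊔ s) + f (r ⊓ s) ≤ f r + f s)
    (Ps : Set (Set U))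
    (hprof : ∀ P ∈ Ps, IsProfileIn star f P)
    (hrobust : ∀ P ∈ Ps, RobustProfile star f P) :
    Splinters star
      (fun pp : {pp : Set U × Set U //
          pp.1 ∈ Ps ∧ pp.2 ∈ Ps ∧ ∃ s, Distinguishes star s pp.1 pp.2} =>
        {a | EffDist star f a pp.1.1 pp.1.2}) := by
  
  intro i j a ha hanj b hb hbni hcross
  have ha' : EffDist star f a i.1.1 i.1.2 := ha
  have hb' : EffDist star f b j.1.1 j.1.2 := hb
  have hanj' : ¬ EffDist star f a j.1.1 j.1.2 := hanj
  have hbni' : ¬ EffDist star f b i.1.1 i.1.2 := hbni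
  rcases le_total (f a) (f b) with hle | hle
  · obtain ⟨c, hc, hcm⟩ := key hstar hfstar hfsub (hprof _ i.2.1) (hprof _ i.2.2.1)
      (hprof _ j.2.1) (hprof _ j.2.2.1) (hrobust _ i.2.1) (hrobust _ i.2.2.1)
      ha' hb' hanj' hcross hle
    refine ⟨c, hc, ?_⟩
    rcases hcm with h | h
    · exact Set.mem_union_left _ h
    · exact Set.mem_union_right _ h
  · obtain ⟨c, hc, hcm⟩ := key hstar hfstar hfsub (hprof _ j.2.1) (hprof _ j.2.2.1)
      (hprof _ i.2.1) (hprof _ i.2.2.1) (hrobust _ j.2.1) (hrobust _ j.2.2.1)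
      hb' ha' hbni' (fun hn => hcross (nested_symm hstar hn)) hle
    refine ⟨c, corner_symm hc, ?_⟩
    rcases hcm with h | h
    · exact Set.mem_union_right _ h
    · exact Set.mem_union_left _ h
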